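/- Fix c ∈ ℝ and let H_c = { ε·[[a, b],[0, a^c]] : ε ∈ {±1}, a > 0, b ∈ ℝ } ≤ GL(2,ℝ). For h = ε·[[a, b],[0, a^c]] define A_H(h) = min( a/(1+|b|), 1/(1+sqrt(a²+b²)) ). Then hᵀ(1,0)ᵀ = ε·(a,b)ᵀ and A_H(h) equals the envelope function A_𝒪 of the orbit 𝒪 = {ξ ∈ ℝ² : ξ₁ ≠ 0} evaluated at hᵀ(1,0)ᵀ, and there exists C > 0 such that for all h ∈ H_c: ‖h‖·A_H(h)^{max(1,|c|)} ≤ C and ‖h⁻¹‖·A_H(h)^{1+|c|} ≤ C, where ‖·‖ is the operator norm. -/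

import Mathlib

open MeasureTheory Matrix Metric

noncomputable section

variable {n : Type*} [Fintype n] [DecidableEq n]

/-- The dual action `ξ ↦ hᵀ ξ` of a matrix on Euclidean space. -/
def dualAct (h : Matrix n n ℝ) (ξ : EuclideanSpace ℝ n) : EuclideanSpace ℝ n :=
  (EuclideanSpace.equiv n ℝ).symm (h.transpose.mulVec (EuclideanSpace.equiv n ℝ ξ))

/-- The envelope function `A_S` of a set `S` (with respect to Euclidean norm and distance). -/
def env (S : Set (EuclideanSpace ℝ n)) (ξ : EuclideanSpace ℝ n) : ℝ :=
  min (infDist ξ S / (1 + Real.sqrt (‖ξ‖ ^ 2 - infDist ξ S ^ 2))) (1 / (1 + ‖ξ‖))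

/-- The Euclidean operator norm of a matrix. -/
def opNorm (m : Matrix n n ℝ) : ℝ :=
  ‖LinearMap.toContinuousLinearMap (Matrix.toEuclideanLin m)‖

end

/- Auxiliary lemmas -/

lemma abs_le_norm2 (x : EuclideanSpace ℝ (Fin 2)) (i : Fin 2) : |x i| ≤ ‖x‖ := by
  rw [EuclideanSpace.norm_eq]
  rw [show |x i| = Real.sqrt (|x i|^2) by rw [Real.sqrt_sq (abs_nonneg _)]]
  apply Real.sqrt_le_sqrt
  fin_cases i <;> simp [Fin.sum_univ_two, sq_abs] <;> positivity

lemma norm_le_sum2 (x : EuclideanSpace ℝ (Fin 2)) : ‖x‖ ≤ |x 0| + |x 1| := by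
  rw [EuclideanSpace.norm_eq]
  rw [show |x 0| + |x 1| = Real.sqrt ((|x 0| + |x 1|)^2) by
    rw [Real.sqrt_sq (by positivity)]]
  apply Real.sqrt_le_sqrt
  simp only [Fin.sum_univ_two, Real.norm_eq_abs, sq_abs]
  nlinarith [abs_nonneg (x 0), abs_nonneg (x 1), sq_abs (x 0), sq_abs (x 1),
    mul_nonneg (abs_nonneg (x 0)) (abs_nonneg (x 1))]

lemma opNorm_le_sum (M : Matrix (Fin 2) (Fin 2) ℝ) :
    opNorm M ≤ |M 0 0| + |M 0 1| + |M 1 0| + |M 1 1| := by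
  apply ContinuousLinearMap.opNorm_le_bound _ (by positivity)
  intro x
  have h1 : ∀ i : Fin 2, |(Matrix.toEuclideanLin M x) i| ≤ (|M i 0| + |M i 1|) * ‖x‖ := by
    intro i
    have : (Matrix.toEuclideanLin M x) i = M i 0 * x 0 + M i 1 * x 1 := by
      fin_cases i <;> simp [Matrix.toEuclideanLin_apply, Matrix.mulVec, dotProduct, Fin.sum_univ_two]
    rw [this]
    calc |M i 0 * x 0 + M i 1 * x 1| ≤ |M i 0 * x 0| + |M i 1 * x 1| := abs_add_le _ _
    _ ≤ |M i 0| * ‖x‖ + |M i 1| * ‖x‖ := by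
        rw [abs_mul, abs_mul]
        gcongr <;> exact abs_le_norm2 x _
    _ = (|M i 0| + |M i 1|) * ‖x‖ := by ring
  calc ‖LinearMap.toContinuousLinearMap (Matrix.toEuclideanLin M) x‖
      ≤ |(Matrix.toEuclideanLin M x) 0| + |(Matrix.toEuclideanLin M x) 1| := norm_le_sum2 _
  _ ≤ (|M 0 0| + |M 0 1|) * ‖x‖ + (|M 1 0| + |M 1 1|) * ‖x‖ := by
      gcongr <;> [exact h1 0; exact h1 1]
  _ = (|M 0 0| + |M 0 1| + |M 1 0| + |M 1 1|) * ‖x‖ := by ring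

lemma infDist_plane (ξ : EuclideanSpace ℝ (Fin 2)) :
    Metric.infDist ξ {x : EuclideanSpace ℝ (Fin 2) | x 0 = 0} = |ξ 0| := by
  apply le_antisymm
  · have : ((EuclideanSpace.equiv (Fin 2) ℝ).symm ![0, ξ 1] : EuclideanSpace ℝ (Fin 2)) ∈
        {x : EuclideanSpace ℝ (Fin 2) | x 0 = 0} := by simp
    refine le_trans (infDist_le_dist_of_mem this) ?_
    rw [dist_eq_norm, EuclideanSpace.norm_eq]
    simp [Fin.sum_univ_two]
    rw [show (ξ : Fin 2 → ℝ) 0 ^ 2 = |ξ 0|^2 by rw [sq_abs]]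
    exact le_of_eq (Real.sqrt_sq (abs_nonneg _))
  · by_contra h
    push_neg at h
    obtain ⟨y, hy, hd⟩ := (infDist_lt_iff ⟨0, by simp⟩).mp h
    have : |ξ 0| ≤ dist ξ y := by
      rw [dist_eq_norm]
      calc |ξ 0| = |(ξ - y) 0| := by simp [hy.out]
      _ ≤ ‖ξ - y‖ := abs_le_norm2 _ _
    linarith

lemma key_rpow (c a m : ℝ) (ha : 0 < a) (hm : 0 < m) (hma : m ≤ a) (hma' : m ≤ a⁻¹) :
    a ^ (-c) * m ^ |c| ≤ 1 := by
  rcases le_or_gt 0 c with hc | hc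
  · rw [abs_of_nonneg hc]
    calc a ^ (-c) * m ^ c ≤ a ^ (-c) * a ^ c :=
          mul_le_mul_of_nonneg_left (Real.rpow_le_rpow hm.le hma hc)
            (Real.rpow_pos_of_pos ha _).le
    _ = 1 := by rw [← Real.rpow_add ha]; simp
  · rw [abs_of_neg hc]
    calc a ^ (-c) * m ^ (-c) ≤ a ^ (-c) * (a⁻¹) ^ (-c) :=
          mul_le_mul_of_nonneg_left (Real.rpow_le_rpow hm.le hma' (by linarith))
            (Real.rpow_pos_of_pos ha _).le
    _ = 1 := by
        rw [Real.inv_rpow ha.le, ← Real.rpow_neg ha.le, neg_neg, ← Real.rpow_add ha]; simp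

lemma dualAct_eval (ε a b c : ℝ) (i : Fin 2) :
    dualAct (ε • !![a, b; 0, a ^ c]) (EuclideanSpace.single (0 : Fin 2) (1 : ℝ)) i =
      ![ε * a, ε * b] i := by
  fin_cases i <;>
    simp [dualAct, Matrix.mulVec, dotProduct, Fin.sum_univ_two,
      EuclideanSpace.single, Matrix.transpose, Pi.single]

/-- For the two-dimensional shearlet-type group `H_c` with elements
`h = ε·[[a,b],[0,a^c]]`: `hᵀ(1,0)ᵀ = ε·(a,b)ᵀ`, the quantity
`A_H(h) = min(a/(1+|b|), 1/(1+√(a²+b²)))` is the envelope function of the orbit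
`𝒪 = {ξ : ξ₁ ≠ 0}` at `hᵀ(1,0)ᵀ`, and `‖h‖·A_H(h)^{max(1,|c|)} ≤ C` and
`‖h⁻¹‖·A_H(h)^{1+|c|} ≤ C` for a constant `C > 0`. -/
theorem stmt19 (c : ℝ) :
    (∀ ε a b : ℝ, (ε = 1 ∨ ε = -1) → 0 < a →
      dualAct (ε • !![a, b; 0, a ^ c]) (EuclideanSpace.single (0 : Fin 2) (1 : ℝ)) =
          (EuclideanSpace.equiv (Fin 2) ℝ).symm (ε • ![a, b]) ∧
        min (a / (1 + |b|)) (1 / (1 + Real.sqrt (a ^ 2 + b ^ 2))) =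
          env {ξ : EuclideanSpace ℝ (Fin 2) | EuclideanSpace.equiv (Fin 2) ℝ ξ 0 ≠ 0}ᶜ
            (dualAct (ε • !![a, b; 0, a ^ c]) (EuclideanSpace.single (0 : Fin 2) (1 : ℝ)))) ∧
      ∃ C : ℝ, 0 < C ∧ ∀ ε a b : ℝ, (ε = 1 ∨ ε = -1) → 0 < a →
        opNorm (ε • !![a, b; 0, a ^ c]) *
            min (a / (1 + |b|)) (1 / (1 + Real.sqrt (a ^ 2 + b ^ 2))) ^ max 1 |c| ≤ C ∧
          opNorm (ε • !![a, b; 0, a ^ c])⁻¹ *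
            min (a / (1 + |b|)) (1 / (1 + Real.sqrt (a ^ 2 + b ^ 2))) ^ (1 + |c|) ≤ C := by
  constructor
  · intro ε a b hε ha
    have hε1 : |ε| = 1 := by rcases hε with h | h <;> simp [h]
    have hε2 : ε ^ 2 = 1 := by rcases hε with h | h <;> simp [h]
    set ξ := dualAct (ε • !![a, b; 0, a ^ c]) (EuclideanSpace.single (0 : Fin 2) (1 : ℝ))
      with hξ
    have hξ0 : ξ 0 = ε * a := dualAct_eval ε a b c 0
    have hξ1 : ξ 1 = ε * b := dualAct_eval ε a b c 1
    constructor
    · apply (EuclideanSpace.equiv (Fin 2) ℝ).injective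
      funext i
      fin_cases i <;> simp [hξ0, hξ1]
    · have hset : {ξ : EuclideanSpace ℝ (Fin 2) | EuclideanSpace.equiv (Fin 2) ℝ ξ 0 ≠ 0}ᶜ =
          {x : EuclideanSpace ℝ (Fin 2) | x 0 = 0} := by
        ext x; simp [EuclideanSpace.equiv]
      have hinf : Metric.infDist ξ
          {ξ : EuclideanSpace ℝ (Fin 2) | EuclideanSpace.equiv (Fin 2) ℝ ξ 0 ≠ 0}ᶜ = a := by
        rw [hset, infDist_plane, hξ0, abs_mul, hε1, one_mul, abs_of_pos ha]
      have hnorm : ‖ξ‖ = Real.sqrt (a ^ 2 + b ^ 2) := by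
        rw [EuclideanSpace.norm_eq]
        simp only [Fin.sum_univ_two, Real.norm_eq_abs, sq_abs]
        rw [hξ0, hξ1]
        ring_nf
        rw [show ε ^ 2 * a ^ 2 + ε ^ 2 * b ^ 2 = a ^ 2 + b ^ 2 by rw [hε2]; ring]
      rw [env, hinf, hnorm]
      congr 1
      rw [Real.sq_sqrt (by positivity)]
      rw [show a ^ 2 + b ^ 2 - a ^ 2 = b ^ 2 by ring, Real.sqrt_sq_eq_abs]
  · refine ⟨3, by norm_num, ?_⟩
    intro ε a b hε ha
    have hε1 : |ε| = 1 := by rcases hε with h | h <;> simp [h]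
    set s := Real.sqrt (a ^ 2 + b ^ 2) with hs
    set m := min (a / (1 + |b|)) (1 / (1 + s)) with hmdef
    have hs0 : 0 ≤ s := Real.sqrt_nonneg _
    have hsa : a ≤ s := by
      rw [hs, Real.le_sqrt ha.le]
      · nlinarith
      · positivity
    have hsb : |b| ≤ s := by
      rw [hs, Real.le_sqrt (abs_nonneg b)]
      · rw [sq_abs]; nlinarith
      · positivity
    have hm_pos : 0 < m := lt_min (by positivity) (by positivity)
    have hm1 : m ≤ 1 := le_trans (min_le_right _ _) (by
      rw [div_le_one (by linarith)]; linarith)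
    have hma : m ≤ a := le_trans (min_le_left _ _) (by
      rw [div_le_iff₀ (by positivity)]
      nlinarith [abs_nonneg b, ha.le])
    have hmAinv : m ≤ a⁻¹ := le_trans (min_le_right _ _) (by
      rw [div_le_iff₀ (by linarith), inv_mul_eq_div, le_div_iff₀ ha]
      nlinarith)
    have hmb : m * |b| ≤ a := by
      have h1 : m ≤ a / (1 + |b|) := min_le_left _ _
      have h2 : m * (1 + |b|) ≤ a := by
        rw [← le_div_iff₀ (by positivity)]; exact h1
      nlinarith [hm_pos.le]
    have hma1 : m * a ≤ 1 := by
      calc m * a ≤ a⁻¹ * a := mul_le_mul_of_nonneg_right hmAinv ha.le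
      _ = 1 := inv_mul_cancel₀ ha.ne'
    have hmb1 : m * |b| ≤ 1 := by
      have h1 : m ≤ 1 / (1 + s) := min_le_right _ _
      have h2 : m * (1 + s) ≤ 1 := by rw [← le_div_iff₀ (by linarith)]; exact h1
      nlinarith [hm_pos.le, abs_nonneg b]
    have hac : (0:ℝ) < a ^ c := Real.rpow_pos_of_pos ha _
    -- powers of m
    have hmk_le_m : m ^ max 1 |c| ≤ m := by
      have := Real.rpow_le_rpow_of_exponent_ge hm_pos hm1 (le_max_left 1 |c|)
      rwa [Real.rpow_one] at this
    have hmk_le_mc : m ^ max 1 |c| ≤ m ^ |c| :=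
      Real.rpow_le_rpow_of_exponent_ge hm_pos hm1 (le_max_right 1 |c|)
    have hmk_nonneg : (0:ℝ) ≤ m ^ max 1 |c| := (Real.rpow_pos_of_pos hm_pos _).le
    have hmt_split : m ^ (1 + |c|) = m * m ^ |c| := by
      rw [Real.rpow_add hm_pos, Real.rpow_one]
    have hmc_pos : (0:ℝ) < m ^ |c| := Real.rpow_pos_of_pos hm_pos _
    have hkey : a ^ (-c) * m ^ |c| ≤ 1 := key_rpow c a m ha hm_pos hma hmAinv
    have hkey' : a ^ c * m ^ |c| ≤ 1 := by
      have := key_rpow (-c) a m ha hm_pos hma hmAinv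
      rwa [neg_neg, abs_neg] at this
    constructor
    · -- first bound
      have hop : opNorm (ε • !![a, b; 0, a ^ c]) ≤ a + |b| + a ^ c := by
        refine le_trans (opNorm_le_sum _) ?_
        simp [abs_mul, hε1, abs_of_pos ha, abs_of_pos hac]
      calc opNorm (ε • !![a, b; 0, a ^ c]) * m ^ max 1 |c|
          ≤ (a + |b| + a ^ c) * m ^ max 1 |c| :=
            mul_le_mul_of_nonneg_right hop hmk_nonneg
      _ = a * m ^ max 1 |c| + |b| * m ^ max 1 |c| + a ^ c * m ^ max 1 |c| := by ring
      _ ≤ 3 := by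
          have h1 : a * m ^ max 1 |c| ≤ 1 := by
            calc a * m ^ max 1 |c| ≤ a * m := mul_le_mul_of_nonneg_left hmk_le_m ha.le
            _ ≤ 1 := by rw [mul_comm]; exact hma1
          have h2 : |b| * m ^ max 1 |c| ≤ 1 := by
            calc |b| * m ^ max 1 |c| ≤ |b| * m :=
              mul_le_mul_of_nonneg_left hmk_le_m (abs_nonneg b)
            _ ≤ 1 := by rw [mul_comm]; exact hmb1
          have h3 : a ^ c * m ^ max 1 |c| ≤ 1 := by
            calc a ^ c * m ^ max 1 |c| ≤ a ^ c * m ^ |c| :=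
              mul_le_mul_of_nonneg_left hmk_le_mc hac.le
            _ ≤ 1 := hkey'
          linarith
    · -- second bound
      have hinv : (ε • !![a, b; 0, a ^ c])⁻¹ =
          ε • !![a⁻¹, -(b / (a * a ^ c)); 0, (a ^ c)⁻¹] := by
        apply Matrix.inv_eq_right_inv
        have hε2 : ε ^ 2 = 1 := by rcases hε with h | h <;> simp [h]
        ext i j
        fin_cases i <;> fin_cases j <;>
          simp [Matrix.mul_apply, Fin.sum_univ_two, Matrix.one_apply] <;>
          field_simp <;> ring_nf <;> simp [hε2]
      have hop : opNorm (ε • !![a, b; 0, a ^ c])⁻¹ ≤ a⁻¹ + |b| / (a * a ^ c) + (a ^ c)⁻¹ := by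
        rw [hinv]
        refine le_trans (opNorm_le_sum _) ?_
        simp [abs_mul, hε1, abs_of_pos (show (0:ℝ) < a⁻¹ by positivity),
          abs_of_pos (show (0:ℝ) < (a ^ c)⁻¹ by positivity), abs_div,
          abs_of_pos (show (0:ℝ) < a * a ^ c by positivity)]
      have hmt_nonneg : (0:ℝ) ≤ m ^ (1 + |c|) := (Real.rpow_pos_of_pos hm_pos _).le
      have hmt_le_m : m ^ (1 + |c|) ≤ m := by
        have := Real.rpow_le_rpow_of_exponent_ge hm_pos hm1
          (by simp [abs_nonneg] : (1:ℝ) ≤ 1 + |c|)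
        rwa [Real.rpow_one] at this
      have hmt_le_mc : m ^ (1 + |c|) ≤ m ^ |c| := by
        rw [hmt_split]
        nlinarith [hmc_pos.le]
      calc opNorm (ε • !![a, b; 0, a ^ c])⁻¹ * m ^ (1 + |c|)
          ≤ (a⁻¹ + |b| / (a * a ^ c) + (a ^ c)⁻¹) * m ^ (1 + |c|) :=
            mul_le_mul_of_nonneg_right hop hmt_nonneg
      _ = a⁻¹ * m ^ (1 + |c|) + |b| / (a * a ^ c) * m ^ (1 + |c|)
            + (a ^ c)⁻¹ * m ^ (1 + |c|) := by ring
      _ ≤ 3 := by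
          have hacinv : (a ^ c)⁻¹ = a ^ (-c) := by
            rw [Real.rpow_neg ha.le]
          have h1 : a⁻¹ * m ^ (1 + |c|) ≤ 1 := by
            calc a⁻¹ * m ^ (1 + |c|) ≤ a⁻¹ * m :=
              mul_le_mul_of_nonneg_left hmt_le_m (by positivity)
            _ ≤ a⁻¹ * a := mul_le_mul_of_nonneg_left hma (by positivity)
            _ = 1 := inv_mul_cancel₀ ha.ne'
          have h3 : (a ^ c)⁻¹ * m ^ (1 + |c|) ≤ 1 := by
            calc (a ^ c)⁻¹ * m ^ (1 + |c|) ≤ (a ^ c)⁻¹ * m ^ |c| :=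
              mul_le_mul_of_nonneg_left hmt_le_mc (by positivity)
            _ = a ^ (-c) * m ^ |c| := by rw [hacinv]
            _ ≤ 1 := hkey
          have h2 : |b| / (a * a ^ c) * m ^ (1 + |c|) ≤ 1 := by
            rw [hmt_split]
            have : |b| / (a * a ^ c) * (m * m ^ |c|) =
                (m * |b|) * a⁻¹ * (a ^ (-c) * m ^ |c|) := by
              rw [Real.rpow_neg ha.le]
              field_simp
            rw [this]
            calc (m * |b|) * a⁻¹ * (a ^ (-c) * m ^ |c|)
                ≤ (m * |b|) * a⁻¹ * 1 :=
                  mul_le_mul_of_nonneg_left hkey (by positivity)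
            _ = (m * |b|) * a⁻¹ := by ring
            _ ≤ a * a⁻¹ := mul_le_mul_of_nonneg_right hmb (by positivity)
            _ = 1 := mul_inv_cancel₀ ha.ne'
          linarith
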